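/- Define Ω(μ) on [0,∞) by Ω(μ)([0,t]) = exp(∫₀^∞ C_μ(-x/t) e^{-x} dx) for t > 0 and Ω(μ)({0}) = μ({0}). Then Ω(μ∗ν)([0,t]) = Ω(μ)([0,t]) · Ω(ν)([0,t]) for all t ≥ 0, i.e., Ω is a homomorphism from classical additive convolution to classical max-convolution on probability measures on [0,∞). -/

import Mathlib

open MeasureTheory Set Filter Real

/-- The distribution function of `Ω(μ)`: equal to `μ({0})` at `t = 0` and to
`exp(∫₀^∞ C_μ(-x/t) e^{-x} dx)` for `t > 0`. -/
noncomputable def omegaDF (μ : Measure ℝ) (t : ℝ) : ℝ :=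
  if t = 0 then (μ {0}).toReal
  else Real.exp (∫ x in Set.Ioi (0:ℝ),
    Real.log (∫ u, Real.exp ((-x / t) * u) ∂μ) * Real.exp (-x))

/-- Additive convolution of two measures on `ℝ`. -/
noncomputable def addConv (μ ν : Measure ℝ) : Measure ℝ :=
  Measure.map (fun p : ℝ × ℝ => p.1 + p.2) (μ.prod ν)

lemma ae_nonneg_of (μ : Measure ℝ) (hμ : μ (Set.Iio 0) = 0) : ∀ᵐ u ∂μ, 0 ≤ u := by
  rw [ae_iff]
  convert hμ using 2
  ext u
  simp [not_le]

lemma int_exp (μ : Measure ℝ) [IsProbabilityMeasure μ] (hμ : μ (Set.Iio 0) = 0)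
    {s : ℝ} (hs : s ≤ 0) : Integrable (fun u => Real.exp (s * u)) μ := by
  refine Integrable.mono' (integrable_const 1)
    (Continuous.aestronglyMeasurable (by continuity)) ?_
  filter_upwards [ae_nonneg_of μ hμ] with u hu
  rw [Real.norm_eq_abs, abs_of_pos (Real.exp_pos _)]
  exact Real.exp_le_one_iff.mpr (mul_nonpos_of_nonpos_of_nonneg hs hu)

lemma mgf_pos (μ : Measure ℝ) [IsProbabilityMeasure μ] (hμ : μ (Set.Iio 0) = 0)
    {s : ℝ} (hs : s ≤ 0) : 0 < ∫ u, Real.exp (s * u) ∂μ := by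
  rw [integral_pos_iff_support_of_nonneg_ae
    (Filter.Eventually.of_forall fun u => (Real.exp_pos _).le) (int_exp μ hμ hs)]
  have : Function.support (fun u => Real.exp (s * u)) = Set.univ := by
    ext u; simp [Function.mem_support, (Real.exp_pos _).ne']
  rw [this]
  simp

lemma mgf_le_one (μ : Measure ℝ) [IsProbabilityMeasure μ] (hμ : μ (Set.Iio 0) = 0)
    {s : ℝ} (hs : s ≤ 0) : ∫ u, Real.exp (s * u) ∂μ ≤ 1 := by
  have h := integral_mono_ae (int_exp μ hμ hs) (integrable_const (1:ℝ)) ?_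
  · simpa using h
  · filter_upwards [ae_nonneg_of μ hμ] with u hu
    exact Real.exp_le_one_iff.mpr (mul_nonpos_of_nonpos_of_nonneg hs hu)

lemma mgf_conv (μ ν : Measure ℝ) [IsProbabilityMeasure μ] [IsProbabilityMeasure ν] (s : ℝ) :
    ∫ u, Real.exp (s * u) ∂(addConv μ ν)
      = (∫ u, Real.exp (s * u) ∂μ) * (∫ u, Real.exp (s * u) ∂ν) := by
  rw [addConv, integral_map (φ := fun p : ℝ × ℝ => p.1 + p.2) (measurable_fst.add measurable_snd).aemeasurable
    (Continuous.aestronglyMeasurable (by continuity))]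
  have : (fun p : ℝ × ℝ => Real.exp (s * (p.1 + p.2)))
      = fun p : ℝ × ℝ => Real.exp (s * p.1) * Real.exp (s * p.2) := by
    funext p; rw [mul_add, Real.exp_add]
  rw [this]
  exact integral_prod_mul (L := ℝ) (fun u => Real.exp (s * u)) (fun u => Real.exp (s * u))

lemma exists_half (μ : Measure ℝ) [IsProbabilityMeasure μ] (hμ : μ (Set.Iio 0) = 0) :
    ∃ n : ℕ, (1/2 : ℝ) ≤ (μ (Set.Icc 0 (n:ℝ))).toReal := by
  have hIci : μ (Set.Ici (0:ℝ)) = 1 := by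
    have := measure_compl (measurableSet_Iio (a := (0:ℝ))) (measure_ne_top μ _)
    rw [hμ] at this
    simpa [compl_Iio] using this
  by_contra h
  push_neg at h
  have hle : ∀ n : ℕ, μ (Set.Icc 0 (n:ℝ)) ≤ 1/2 := by
    intro n
    have hn := (h n).le
    by_contra hc
    push_neg at hc
    have h2 : (1/2 : ℝ) < (μ (Set.Icc 0 (n:ℝ))).toReal := by
      have := ENNReal.toReal_strict_mono (measure_ne_top μ _) hc
      simpa using this
    linarith
  have hunion : Set.Ici (0:ℝ) = ⋃ n : ℕ, Set.Icc 0 (n:ℝ) := by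
    ext x
    simp only [Set.mem_Ici, Set.mem_iUnion, Set.mem_Icc]
    constructor
    · intro hx
      obtain ⟨n, hn⟩ := exists_nat_ge x
      exact ⟨n, hx, hn⟩
    · rintro ⟨n, hn, -⟩; exact hn
  have hmono : Monotone fun n : ℕ => Set.Icc (0:ℝ) (n:ℝ) := fun a b hab =>
    Set.Icc_subset_Icc le_rfl (by exact_mod_cast hab)
  have hfin : μ (Set.Ici (0:ℝ)) ≤ 1/2 := by
    rw [hunion, hmono.directed_le.measure_iUnion]
    exact iSup_le hle
  rw [hIci] at hfin
  norm_num at hfin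

lemma log_mgf_integrable (μ : Measure ℝ) [IsProbabilityMeasure μ] (hμ : μ (Set.Iio 0) = 0)
    {t : ℝ} (ht : 0 < t) :
    IntegrableOn (fun x => Real.log (∫ u, Real.exp ((-x / t) * u) ∂μ) * Real.exp (-x))
      (Set.Ioi 0) := by
  obtain ⟨n, hn⟩ := exists_half μ hμ
  -- measurability
  have hcont : Continuous fun p : ℝ × ℝ => Real.exp ((-p.1 / t) * p.2) := by continuity
  have hmeas : StronglyMeasurable fun x => ∫ u, Real.exp ((-x / t) * u) ∂μ :=
    hcont.stronglyMeasurable.integral_prod_right'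
  have haesm : AEStronglyMeasurable
      (fun x => Real.log (∫ u, Real.exp ((-x / t) * u) ∂μ) * Real.exp (-x))
      (volume.restrict (Set.Ioi 0)) := by
    exact ((Real.measurable_log.comp hmeas.measurable).mul
      (Real.continuous_exp.comp continuous_neg).measurable).aestronglyMeasurable
  -- bound integrable
  have h1 : IntegrableOn (fun x => Real.exp (-x)) (Set.Ioi (0:ℝ)) := by
    have := exp_neg_integrableOn_Ioi (0:ℝ) (one_pos)
    simpa using this
  have h2 : IntegrableOn (fun x => x * Real.exp (-x)) (Set.Ioi (0:ℝ)) := by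
    have hg := Real.GammaIntegral_convergent (by norm_num : (0:ℝ) < 2)
    refine hg.congr_fun (fun x hx => ?_) measurableSet_Ioi
    have : ((2:ℝ) - 1) = 1 := by norm_num
    rw [this]
    simp only [Real.rpow_one]
    ring
  have hb : IntegrableOn (fun x => (Real.log 2 + x * n / t) * Real.exp (-x)) (Set.Ioi 0) := by
    have hsum := (h1.const_mul (Real.log 2)).add (h2.const_mul ((n:ℝ) / t))
    refine MeasureTheory.IntegrableOn.congr_fun hsum (fun x _ => ?_) measurableSet_Ioi
    simp only [Pi.add_apply]
    ring
  refine hb.mono' haesm ?_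
  rw [ae_restrict_iff' measurableSet_Ioi]
  refine Filter.Eventually.of_forall fun x hx => ?_
  have hx0 : (0:ℝ) < x := hx
  set s : ℝ := -x / t with hs_def
  have hs : s ≤ 0 := by
    apply div_nonpos_of_nonpos_of_nonneg <;> linarith
  have hIpos : 0 < ∫ u, Real.exp (s * u) ∂μ := mgf_pos μ hμ hs
  have hIle : ∫ u, Real.exp (s * u) ∂μ ≤ 1 := mgf_le_one μ hμ hs
  -- lower bound for the integral
  have hlow : (1/2 : ℝ) * Real.exp (s * n) ≤ ∫ u, Real.exp (s * u) ∂μ := by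
    have hset : ∫ u in Set.Icc 0 (n:ℝ), Real.exp (s * u) ∂μ ≤ ∫ u, Real.exp (s * u) ∂μ :=
      setIntegral_le_integral (int_exp μ hμ hs)
        (Filter.Eventually.of_forall fun u => (Real.exp_pos _).le)
    have hconst : Real.exp (s * n) * (μ (Set.Icc 0 (n:ℝ))).toReal
        ≤ ∫ u in Set.Icc 0 (n:ℝ), Real.exp (s * u) ∂μ := by
      refine setIntegral_ge_of_const_le_real measurableSet_Icc (measure_ne_top μ _)
        (fun u hu => ?_) ((int_exp μ hμ hs).integrableOn)
      exact Real.exp_le_exp.mpr (mul_le_mul_of_nonpos_left hu.2 hs)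
    calc (1/2 : ℝ) * Real.exp (s * n)
        ≤ (μ (Set.Icc 0 (n:ℝ))).toReal * Real.exp (s * n) := by
          apply mul_le_mul_of_nonneg_right hn (Real.exp_pos _).le
      _ = Real.exp (s * n) * (μ (Set.Icc 0 (n:ℝ))).toReal := by ring
      _ ≤ ∫ u in Set.Icc 0 (n:ℝ), Real.exp (s * u) ∂μ := hconst
      _ ≤ ∫ u, Real.exp (s * u) ∂μ := hset
  have hloglow : -(Real.log 2 + x * n / t) ≤ Real.log (∫ u, Real.exp (s * u) ∂μ) := by
    have := Real.log_le_log (by positivity) hlow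
    rw [Real.log_mul (by norm_num) (Real.exp_pos _).ne', Real.log_exp] at this
    have h12 : Real.log (1/2 : ℝ) = -Real.log 2 := by
      rw [Real.log_div one_ne_zero (by norm_num), Real.log_one]; ring
    rw [h12] at this
    have hsn : s * n = -(x * n / t) := by rw [hs_def]; ring
    rw [hsn] at this
    linarith
  have hloghigh : Real.log (∫ u, Real.exp (s * u) ∂μ) ≤ 0 := Real.log_nonpos hIpos.le hIle
  rw [Real.norm_eq_abs, abs_mul, abs_of_pos (Real.exp_pos _)]
  have hbpos : 0 ≤ Real.log 2 + x * n / t := by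
    have h2 : (0:ℝ) ≤ Real.log 2 := Real.log_nonneg (by norm_num)
    have : (0:ℝ) ≤ x * n / t := by positivity
    linarith
  have habs : |Real.log (∫ u, Real.exp (s * u) ∂μ)| ≤ Real.log 2 + x * n / t := by
    rw [abs_le]; constructor
    · exact hloglow
    · linarith
  exact mul_le_mul_of_nonneg_right habs (Real.exp_pos _).le

/-- `Ω` is a homomorphism from classical additive convolution to classical
max-convolution: `Ω(μ∗ν)([0,t]) = Ω(μ)([0,t]) ⬝ Ω(ν)([0,t])` for all `t ≥ 0`. -/
theorem omega_hom (μ ν : Measure ℝ) [IsProbabilityMeasure μ] [IsProbabilityMeasure ν]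
    (hμ : μ (Set.Iio 0) = 0) (hν : ν (Set.Iio 0) = 0) :
    ∀ t : ℝ, 0 ≤ t → omegaDF (addConv μ ν) t = omegaDF μ t * omegaDF ν t := by
  intro t ht
  rcases eq_or_lt_of_le ht with h0 | hpos
  · -- t = 0
    subst h0
    simp only [omegaDF, if_pos rfl, if_true, eq_self_iff_true]
    have hnull : (μ.prod ν) ((Set.Ici (0:ℝ) ×ˢ Set.Ici (0:ℝ))ᶜ) = 0 := by
      have hsub : (Set.Ici (0:ℝ) ×ˢ Set.Ici (0:ℝ))ᶜ
          ⊆ (Set.Iio 0 ×ˢ Set.univ) ∪ (Set.univ ×ˢ Set.Iio 0) := by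
        intro p hp
        simp only [Set.mem_compl_iff, Set.mem_prod, Set.mem_Ici, not_and_or, not_le] at hp
        simp only [Set.mem_union, Set.mem_prod, Set.mem_Iio, Set.mem_univ, and_true, true_and]
        exact hp
      refine measure_mono_null hsub ?_
      refine measure_union_null ?_ ?_ <;> rw [Measure.prod_prod] <;> simp [hμ, hν]
    have hmapply : addConv μ ν {0} = (μ.prod ν) ((fun p : ℝ × ℝ => p.1 + p.2) ⁻¹' {0}) :=
      Measure.map_apply (measurable_fst.add measurable_snd) (measurableSet_singleton 0)
    have hae0 : ∀ᵐ p ∂(μ.prod ν), p ∈ Set.Ici (0:ℝ) ×ˢ Set.Ici (0:ℝ) := by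
      rw [ae_iff]
      have hset : {p : ℝ × ℝ | ¬ p ∈ Set.Ici (0:ℝ) ×ˢ Set.Ici (0:ℝ)}
          = (Set.Ici (0:ℝ) ×ˢ Set.Ici (0:ℝ))ᶜ := rfl
      rw [hset]
      exact hnull
    have haeeq : ((fun p : ℝ × ℝ => p.1 + p.2) ⁻¹' {0})
        =ᵐ[μ.prod ν] (({0} : Set ℝ) ×ˢ ({0} : Set ℝ)) := by
      rw [Filter.eventuallyEq_set]
      filter_upwards [hae0] with p hp
      obtain ⟨hp1, hp2⟩ := hp
      simp only [Set.mem_preimage, Set.mem_singleton_iff, Set.mem_prod]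
      simp only [Set.mem_Ici] at hp1 hp2
      constructor
      · intro h
        constructor
        · linarith
        · linarith
      · rintro ⟨h1, h2⟩
        rw [h1, h2]; ring
    rw [hmapply, measure_congr haeeq, Measure.prod_prod, ENNReal.toReal_mul]
  · -- t > 0
    have ht0 : t ≠ 0 := ne_of_gt hpos
    simp only [omegaDF, if_neg ht0]
    rw [← Real.exp_add]
    congr 1
    have hcongr : ∫ x in Set.Ioi (0:ℝ),
        Real.log (∫ u, Real.exp ((-x / t) * u) ∂(addConv μ ν)) * Real.exp (-x)
        = ∫ x in Set.Ioi (0:ℝ),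
          (Real.log (∫ u, Real.exp ((-x / t) * u) ∂μ) * Real.exp (-x)
            + Real.log (∫ u, Real.exp ((-x / t) * u) ∂ν) * Real.exp (-x)) := by
      refine setIntegral_congr_fun measurableSet_Ioi fun x hx => ?_
      have hx0 : (0:ℝ) < x := hx
      have hs : (-x / t) ≤ 0 := by
        apply div_nonpos_of_nonpos_of_nonneg <;> linarith
      rw [mgf_conv μ ν (-x / t), Real.log_mul (mgf_pos μ hμ hs).ne' (mgf_pos ν hν hs).ne']
      ring
    rw [hcongr, integral_add (log_mgf_integrable μ hμ hpos) (log_mgf_integrable ν hν hpos)]
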